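/- Let n ≥ 4, fix M ≥ 0 and R > 0, and define φ_R' : [0,∞) → ℝ by φ_R'(r) = M + (n−1)r/(2nR) for r ≤ R and φ_R'(r) = M + 1/2 − R^{n−1}/(2n·r^{n−1}) for r > R, and Φ(x) = ∫₀^{|x|} φ_R'(s) ds for x ∈ ℝⁿ. Then: (i) M ≤ φ_R'(r) ≤ M + 1/2 and φ_R' is continuous; (ii) for 0 < |x| < R, ΔΦ(x) = (n−1)/(2R) + M(n−1)/|x|, and for |x| > R, ΔΦ(x) = (2M+1)(n−1)/(2|x|); (iii) for 0 < |x| < R, Δ(ΔΦ)(x) = −M(n−1)(n−3)/|x|³, and for |x| > R, Δ(ΔΦ)(x) = −(M+1/2)(n−1)(n−3)/|x|³; in particular the bi-Laplacian of Φ is nonpositive away from the origin and the sphere {|x| = R}. -/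

import Mathlib

open MeasureTheory Metric Real Set

noncomputable section

abbrev Euc (n : ℕ) := EuclideanSpace ℝ (Fin n)

/-- Laplacian via iterated coordinate derivatives. -/
def lap {n : ℕ} (g : Euc n → ℝ) (x : Euc n) : ℝ :=
  ∑ j : Fin n, fderiv ℝ (fun y => fderiv ℝ g y (EuclideanSpace.single j 1)) x
    (EuclideanSpace.single j 1)

/-- Bi-Laplacian. -/
def bilap {n : ℕ} (g : Euc n → ℝ) (x : Euc n) : ℝ := lap (fun y => lap g y) x

/-- The derivative `φ_R'` of the higher-dimensional Morawetz multiplier (formula (3.26)). -/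
def phiD (n : ℕ) (M R r : ℝ) : ℝ :=
  if r ≤ R then M + ((n : ℝ) - 1) * r / (2 * n * R)
  else M + 1/2 - R ^ (n - 1) / (2 * n * r ^ (n - 1))

/-- The higher-dimensional Morawetz multiplier `Φ(x) = ∫₀^{|x|} φ_R'(s) ds`. -/
def Phi (n : ℕ) (M R : ℝ) (x : Euc n) : ℝ := ∫ s in (0 : ℝ)..‖x‖, phiD n M R s

variable {n : ℕ}

lemma lap_congr {f g : Euc n → ℝ} {x : Euc n} (h : f =ᶠ[nhds x] g) : lap f x = lap g x := by
  unfold lap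
  refine Finset.sum_congr rfl fun j _ => ?_
  have h1 : (fun y => fderiv ℝ f y (EuclideanSpace.single j 1)) =ᶠ[nhds x]
      (fun y => fderiv ℝ g y (EuclideanSpace.single j 1)) := by
    filter_upwards [h.fderiv (𝕜 := ℝ)] with y hy using by rw [hy]
  rw [h1.fderiv_eq]

lemma q_eq_normsq (y : Euc n) : ∑ i, y i ^ 2 = ‖y‖ ^ 2 := by
  rw [EuclideanSpace.norm_eq, Real.sq_sqrt (by positivity)]
  simp [sq_abs]

lemma hasFDerivAt_q (y : Euc n) :
    HasFDerivAt (fun z : Euc n => ∑ i, z i ^ 2)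
      (∑ i, (2 * y i) • (EuclideanSpace.proj i : Euc n →L[ℝ] ℝ)) y := by
  have h : ∀ i ∈ Finset.univ, HasFDerivAt (fun z : Euc n => z i ^ 2)
      ((2 * y i) • (EuclideanSpace.proj i : Euc n →L[ℝ] ℝ)) y := by
    intro i _
    have hp := (EuclideanSpace.proj (𝕜 := ℝ) i).hasFDerivAt (x := y)
    have := hp.mul hp
    have h2 : (fun z : Euc n => z i ^ 2) = fun z : Euc n => z i * z i := by
      funext z; ring
    rw [h2]
    refine this.congr_fderiv ?_
    ext z
    simp [two_mul]
    ring
  simpa using HasFDerivAt.fun_sum h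

lemma sum_proj_apply (y : Euc n) (j : Fin n) :
    (∑ i, (2 * y i) • (EuclideanSpace.proj i : Euc n →L[ℝ] ℝ))
      (EuclideanSpace.single j 1) = 2 * y j := by
  simp [ContinuousLinearMap.sum_apply, EuclideanSpace.single_apply, PiLp.proj_apply]

lemma lap_radial_aux (A c₁ c₂ p r : ℝ) (x : Euc n) (hx : x ≠ 0) :
    lap (fun y : Euc n => A + c₁ * (∑ i, y i ^ 2) ^ p + c₂ * (∑ i, y i ^ 2) ^ r) x
      = c₁ * (2 * p * (2 * p + n - 2)) * (∑ i, x i ^ 2) ^ (p - 1)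
        + c₂ * (2 * r * (2 * r + n - 2)) * (∑ i, x i ^ 2) ^ (r - 1) := by
  have hqpos : ∀ y : Euc n, y ≠ 0 → 0 < ∑ i, y i ^ 2 := by
    intro y hy
    rw [q_eq_normsq]
    have : ‖y‖ ≠ 0 := norm_ne_zero_iff.2 hy
    positivity
  -- first derivative, valid for y ≠ 0
  have hF : ∀ (y : Euc n), y ≠ 0 →
      HasFDerivAt (fun z : Euc n => A + c₁ * (∑ i, z i ^ 2) ^ p + c₂ * (∑ i, z i ^ 2) ^ r)
        ((c₁ * (p * (∑ i, y i ^ 2) ^ (p-1)) + c₂ * (r * (∑ i, y i ^ 2) ^ (r-1))) •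
          (∑ i, (2 * y i) • (EuclideanSpace.proj i : Euc n →L[ℝ] ℝ))) y := by
    intro y hy
    have hq' := hasFDerivAt_q y
    have h₁ := (hq'.rpow_const (p := p) (Or.inl (hqpos y hy).ne')).const_mul c₁
    have h₂ := (hq'.rpow_const (p := r) (Or.inl (hqpos y hy).ne')).const_mul c₂
    have h0 := ((hasFDerivAt_const A y).add h₁).add h₂
    refine h0.congr_fderiv ?_
    ext z
    simp only [ContinuousLinearMap.smul_apply, ContinuousLinearMap.add_apply,
      ContinuousLinearMap.zero_apply, smul_eq_mul]
    ring
  have hD : ∀ (y : Euc n), y ≠ 0 → ∀ j : Fin n,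
      fderiv ℝ (fun z : Euc n => A + c₁ * (∑ i, z i ^ 2) ^ p + c₂ * (∑ i, z i ^ 2) ^ r) y
        (EuclideanSpace.single j 1)
        = (c₁ * (p * (∑ i, y i ^ 2) ^ (p-1)) + c₂ * (r * (∑ i, y i ^ 2) ^ (r-1))) * (2 * y j) := by
    intro y hy j
    rw [(hF y hy).fderiv]
    rw [ContinuousLinearMap.smul_apply, sum_proj_apply]
    simp
  -- second derivative
  have hopen : IsOpen {y : Euc n | y ≠ 0} := isOpen_compl_singleton
  have key : ∀ j : Fin n,
      fderiv ℝ (fun y => fderiv ℝ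
          (fun z : Euc n => A + c₁ * (∑ i, z i ^ 2) ^ p + c₂ * (∑ i, z i ^ 2) ^ r) y
          (EuclideanSpace.single j 1)) x (EuclideanSpace.single j 1)
      = 2 * (c₁ * (p * (∑ i, x i ^ 2) ^ (p-1)) + c₂ * (r * (∑ i, x i ^ 2) ^ (r-1)))
        + (c₁ * (p * (p-1) * (∑ i, x i ^ 2) ^ (p-2)) + c₂ * (r * (r-1) * (∑ i, x i ^ 2) ^ (r-2)))
          * (4 * x j ^ 2) := by
    intro j
    have heq : (fun y => fderiv ℝ
          (fun z : Euc n => A + c₁ * (∑ i, z i ^ 2) ^ p + c₂ * (∑ i, z i ^ 2) ^ r) y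
          (EuclideanSpace.single j 1)) =ᶠ[nhds x]
        (fun y : Euc n => (c₁ * (p * (∑ i, y i ^ 2) ^ (p-1))
          + c₂ * (r * (∑ i, y i ^ 2) ^ (r-1))) * (2 * y j)) :=
      Filter.eventually_of_mem (hopen.mem_nhds hx) fun y hy => hD y hy j
    rw [heq.fderiv_eq]
    -- derivative of u * v
    have hu : HasFDerivAt (fun y : Euc n => c₁ * (p * (∑ i, y i ^ 2) ^ (p-1))
          + c₂ * (r * (∑ i, y i ^ 2) ^ (r-1)))
        ((c₁ * (p * ((p-1) * (∑ i, x i ^ 2) ^ (p-2))) + c₂ * (r * ((r-1) * (∑ i, x i ^ 2) ^ (r-2)))) •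
          (∑ i, (2 * x i) • (EuclideanSpace.proj i : Euc n →L[ℝ] ℝ))) x := by
      have hq' := hasFDerivAt_q x
      have h₁ := ((hq'.rpow_const (p := p - 1) (Or.inl (hqpos x hx).ne')).const_mul p).const_mul c₁
      have h₂ := ((hq'.rpow_const (p := r - 1) (Or.inl (hqpos x hx).ne')).const_mul r).const_mul c₂
      have h0 := h₁.add h₂
      refine h0.congr_fderiv ?_
      ext z
      simp only [ContinuousLinearMap.smul_apply, ContinuousLinearMap.add_apply, smul_eq_mul]
      rw [show p - 1 - 1 = p - 2 by ring, show r - 1 - 1 = r - 2 by ring]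
      ring
    have hv : HasFDerivAt (fun y : Euc n => 2 * y j)
        ((2:ℝ) • (EuclideanSpace.proj j : Euc n →L[ℝ] ℝ)) x :=
      ((EuclideanSpace.proj (𝕜 := ℝ) j).hasFDerivAt (x := x)).const_mul 2
    have hm := hu.fun_mul hv
    rw [hm.fderiv]
    simp [ContinuousLinearMap.add_apply, ContinuousLinearMap.smul_apply,
      sum_proj_apply, smul_eq_mul, PiLp.proj_apply, EuclideanSpace.single_apply]
    ring
  unfold lap
  rw [Finset.sum_congr rfl fun j _ => key j]
  rw [Finset.sum_add_distrib, Finset.sum_const, Finset.card_univ, Fintype.card_fin,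
    ← Finset.mul_sum]
  have hqx := hqpos x hx
  have e₁ : (∑ i, x i ^ 2) ^ (p - 1) = (∑ i, x i ^ 2) * (∑ i, x i ^ 2) ^ (p - 2) := by
    rw [show p - 1 = 1 + (p - 2) by ring, Real.rpow_add hqx, Real.rpow_one]
  have e₂ : (∑ i, x i ^ 2) ^ (r - 1) = (∑ i, x i ^ 2) * (∑ i, x i ^ 2) ^ (r - 2) := by
    rw [show r - 1 = 1 + (r - 2) by ring, Real.rpow_add hqx, Real.rpow_one]
  have hs : ∑ j : Fin n, (4 : ℝ) * x j ^ 2 = 4 * ∑ i, x i ^ 2 := by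
    rw [Finset.mul_sum]
  rw [hs]
  rw [e₁, e₂]
  ring

lemma norm_rpow_eq (y : Euc n) (a : ℝ) : ‖y‖ ^ a = (∑ i, y i ^ 2) ^ (a / 2) := by
  rw [q_eq_normsq, ← Real.rpow_natCast ‖y‖ 2, ← Real.rpow_mul (norm_nonneg y)]
  norm_num
  congr 1
  ring

lemma lap_radial (A c₁ c₂ a b : ℝ) (x : Euc n) (hx : x ≠ 0) :
    lap (fun y : Euc n => A + c₁ * ‖y‖ ^ a + c₂ * ‖y‖ ^ b) x
      = c₁ * (a * (a + n - 2)) * ‖x‖ ^ (a - 2) + c₂ * (b * (b + n - 2)) * ‖x‖ ^ (b - 2) := by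
  have hfun : (fun y : Euc n => A + c₁ * ‖y‖ ^ a + c₂ * ‖y‖ ^ b)
      = fun y : Euc n => A + c₁ * (∑ i, y i ^ 2) ^ (a/2) + c₂ * (∑ i, y i ^ 2) ^ (b/2) := by
    funext y; rw [norm_rpow_eq, norm_rpow_eq]
  rw [hfun, lap_radial_aux A c₁ c₂ (a/2) (b/2) x hx,
    show a/2 - 1 = (a-2)/2 by ring, show b/2 - 1 = (b-2)/2 by ring,
    ← norm_rpow_eq, ← norm_rpow_eq]
  ring


lemma phiD_bounds {M R : ℝ} (hn : 4 ≤ n) (hM : 0 ≤ M) (hR : 0 < R) {r : ℝ} (hr : 0 ≤ r) :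
    M ≤ phiD n M R r ∧ phiD n M R r ≤ M + 1/2 := by
  have hn4 : (4:ℝ) ≤ (n:ℝ) := by exact_mod_cast hn
  unfold phiD
  split_ifs with h
  · constructor
    · have : 0 ≤ ((n:ℝ)-1) * r / (2*n*R) :=
        div_nonneg (by nlinarith) (by positivity)
      linarith
    · have h2 : ((n:ℝ)-1)*r/(2*n*R) ≤ 1/2 := by
        rw [div_le_iff₀ (by positivity)]
        nlinarith
      linarith
  · push_neg at h
    have hrpos : 0 < r := lt_trans hR h
    have hpow : R ^ (n-1) ≤ r ^ (n-1) := pow_le_pow_left₀ hR.le h.le _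
    have hrp : (0:ℝ) < r ^ (n-1) := by positivity
    constructor
    · have h2 : R^(n-1)/(2*(n:ℝ)*r^(n-1)) ≤ 1/2 := by
        rw [div_le_iff₀ (by positivity)]
        nlinarith
      linarith
    · have : (0:ℝ) ≤ R^(n-1)/(2*(n:ℝ)*r^(n-1)) := by positivity
      linarith

lemma phiD_contOn {M R : ℝ} (hn : 4 ≤ n) (hR : 0 < R) :
    ContinuousOn (phiD n M R) (Set.Ici 0) := by
  have hn4 : (4:ℝ) ≤ (n:ℝ) := by exact_mod_cast hn
  have hn0 : (n:ℝ) ≠ 0 := by linarith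
  unfold phiD
  apply ContinuousOn.if
  · rintro a ⟨-, ha⟩
    have hfr : frontier {a : ℝ | a ≤ R} = {R} := frontier_Iic
    rw [hfr] at ha
    rw [Set.mem_singleton_iff.mp ha]
    have hRp : R ^ (n-1) ≠ 0 := by positivity
    field_simp
    ring
  · exact (by fun_prop : Continuous fun a : ℝ => M + ((n:ℝ)-1)*a/(2*n*R)).continuousOn
  · have hsub : Set.Ici (0:ℝ) ∩ closure {a : ℝ | ¬ a ≤ R} ⊆ {a : ℝ | a ≠ 0} := by
      intro a ha
      have hset : {a : ℝ | ¬ a ≤ R} = Set.Ioi R := by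
        ext t; simp [not_le, Set.mem_Ioi]
      rw [hset, closure_Ioi] at ha
      have := ha.2
      simp only [Set.mem_Ici] at this
      simp only [Set.mem_setOf_eq]
      intro h0
      rw [h0] at this
      linarith
    apply ContinuousOn.mono (s := {a : ℝ | a ≠ 0}) ?_ hsub
    apply ContinuousOn.sub continuousOn_const
    apply ContinuousOn.div continuousOn_const (by fun_prop)
    intro a ha
    have : a ≠ 0 := ha
    positivity

lemma Phi_inner_formula {M R : ℝ} (hn : 4 ≤ n) (hR : 0 < R) {t : ℝ} (ht0 : 0 ≤ t) (ht : t < R) :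
    ∫ s in (0:ℝ)..t, phiD n M R s = M * t + ((n:ℝ)-1)/(4*n*R) * t^2 := by
  have hn4 : (4:ℝ) ≤ (n:ℝ) := by exact_mod_cast hn
  have hcong : ∫ s in (0:ℝ)..t, phiD n M R s
      = ∫ s in (0:ℝ)..t, (M + ((n:ℝ)-1)*s/(2*n*R)) := by
    apply intervalIntegral.integral_congr
    intro s hs
    rw [Set.uIcc_of_le ht0] at hs
    unfold phiD
    rw [if_pos (le_trans hs.2 ht.le)]
  rw [hcong]
  have hd : ∀ s ∈ Set.uIcc (0:ℝ) t, HasDerivAt (fun u => M * u + ((n:ℝ)-1)/(4*n*R) * u^2)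
      (M + ((n:ℝ)-1)*s/(2*n*R)) s := by
    intro s _
    have h1 : HasDerivAt (fun u : ℝ => M * u) M s := by
      simpa using (hasDerivAt_id s).const_mul M
    have h2 := (hasDerivAt_pow 2 s).const_mul (((n:ℝ)-1)/(4*n*R))
    have h3 := h1.fun_add h2
    refine h3.congr_deriv ?_
    push_cast
    field_simp
    ring
  rw [intervalIntegral.integral_eq_sub_of_hasDerivAt hd
    ((Continuous.continuousOn (by fun_prop)).intervalIntegrable)]
  ring

lemma Phi_outer_formula {M R : ℝ} (hn : 4 ≤ n) (hR : 0 < R) {t : ℝ} (ht : R < t) :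
    ∫ s in (0:ℝ)..t, phiD n M R s
      = ((∫ s in (0:ℝ)..R, phiD n M R s)
          - ((M+1/2)*R + R^(n-1)/(2*n*((n:ℝ)-2)) * R ^ ((2:ℝ)-n)))
        + (M+1/2) * t + R^(n-1)/(2*n*((n:ℝ)-2)) * t ^ ((2:ℝ)-n) := by
  have hn4 : (4:ℝ) ≤ (n:ℝ) := by exact_mod_cast hn
  have hint : ∀ u v : ℝ, 0 ≤ u → IntervalIntegrable (phiD n M R) volume u v → True := fun _ _ _ _ => trivial
  have hii : ∀ {u v : ℝ}, 0 ≤ u → 0 ≤ v → IntervalIntegrable (phiD n M R) volume u v := by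
    intro u v hu hv
    apply (phiD_contOn hn hR).mono ?_ |>.intervalIntegrable
    rw [Set.uIcc_eq_union]
    rintro s hs
    rcases hs with hs | hs
    · exact le_trans hu hs.1
    · exact le_trans hv hs.1
  have hsplit : ∫ s in (0:ℝ)..t, phiD n M R s
      = (∫ s in (0:ℝ)..R, phiD n M R s) + ∫ s in R..t, phiD n M R s :=
    (intervalIntegral.integral_add_adjacent_intervals (hii le_rfl hR.le)
      (hii hR.le (le_trans hR.le ht.le))).symm
  have hcong : ∫ s in R..t, phiD n M R s
      = ∫ s in R..t, (M + 1/2 - R ^ (n-1) / (2*n*s^(n-1))) := by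
    apply intervalIntegral.integral_congr
    intro s hs
    rw [Set.uIcc_of_le ht.le] at hs
    unfold phiD
    split_ifs with h
    · have hsR : s = R := le_antisymm h hs.1
      subst hsR
      have h1 : s ^ (n-1) ≠ 0 := by positivity
      have h2 : (n:ℝ) ≠ 0 := by linarith
      field_simp
      ring
    · rfl
  have hd : ∀ s ∈ Set.uIcc R t, HasDerivAt
      (fun u : ℝ => (M+1/2)*u + R^(n-1)/(2*n*((n:ℝ)-2)) * u ^ ((2:ℝ)-n))
      (M + 1/2 - R ^ (n-1) / (2*n*s^(n-1))) s := by
    intro s hs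
    rw [Set.uIcc_of_le ht.le] at hs
    have hs0 : 0 < s := lt_of_lt_of_le hR hs.1
    have h1 : HasDerivAt (fun u : ℝ => (M+1/2)*u) (M+1/2) s := by
      simpa using (hasDerivAt_id s).const_mul (M+1/2)
    have h2 : HasDerivAt (fun u : ℝ => u ^ ((2:ℝ)-n)) (((2:ℝ)-n) * s ^ ((2:ℝ)-n-1)) s :=
      Real.hasDerivAt_rpow_const (Or.inl hs0.ne')
    have h3 := h1.fun_add (h2.const_mul (R^(n-1)/(2*n*((n:ℝ)-2))))
    refine h3.congr_deriv ?_
    have e : s ^ ((2:ℝ)-n-1) = (s ^ (n-1 : ℕ))⁻¹ := by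
      rw [show (2:ℝ)-n-1 = -((n:ℝ)-1) by ring, Real.rpow_neg hs0.le,
        ← Real.rpow_natCast s (n-1), Nat.cast_sub (by omega : 1 ≤ n), Nat.cast_one]
    rw [e]
    have h4 : s ^ (n-1) ≠ 0 := by positivity
    have h5 : (n:ℝ) ≠ 0 := by linarith
    have h6 : (n:ℝ) - 2 ≠ 0 := by linarith
    field_simp
    ring
  have hii2 : IntervalIntegrable (fun s : ℝ => M + 1/2 - R ^ (n-1) / (2*n*s^(n-1)))
      volume R t := by
    apply ContinuousOn.intervalIntegrable
    apply ContinuousOn.sub continuousOn_const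
    apply ContinuousOn.div continuousOn_const (by fun_prop)
    intro s hs
    rw [Set.uIcc_of_le ht.le] at hs
    have hs0 : 0 < s := lt_of_lt_of_le hR hs.1
    have hn0 : (n:ℝ) ≠ 0 := by linarith
    positivity
  rw [hsplit, hcong, intervalIntegral.integral_eq_sub_of_hasDerivAt hd hii2]
  ring

/-- **Computations (3.26)–(3.31) for the higher-dimensional Morawetz multiplier.**
For `n ≥ 4`, `M ≥ 0`, `R > 0`: (i) `M ≤ φ_R' ≤ M + 1/2` and `φ_R'` is continuous;
(ii) `ΔΦ = (n-1)/(2R) + M(n-1)/|x|` for `0 < |x| < R`, and `(2M+1)(n-1)/(2|x|)` for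
`|x| > R`; (iii) `Δ(ΔΦ) = -M(n-1)(n-3)/|x|³` for `0 < |x| < R`, and
`-(M+1/2)(n-1)(n-3)/|x|³` for `|x| > R`; in particular the bi-Laplacian is nonpositive
away from the origin and the sphere `{|x| = R}`. -/
theorem morawetz_multiplier_higher_dim (n : ℕ) (hn : 4 ≤ n) (M R : ℝ) (hM : 0 ≤ M)
    (hR : 0 < R) :
    (∀ r : ℝ, 0 ≤ r → M ≤ phiD n M R r ∧ phiD n M R r ≤ M + 1/2)
    ∧ ContinuousOn (phiD n M R) (Set.Ici 0)
    ∧ (∀ x : Euc n, x ≠ 0 → ‖x‖ < R →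
        lap (Phi n M R) x = ((n : ℝ) - 1) / (2 * R) + M * ((n : ℝ) - 1) / ‖x‖)
    ∧ (∀ x : Euc n, R < ‖x‖ →
        lap (Phi n M R) x = (2 * M + 1) * ((n : ℝ) - 1) / (2 * ‖x‖))
    ∧ (∀ x : Euc n, x ≠ 0 → ‖x‖ < R →
        bilap (Phi n M R) x = -(M * ((n : ℝ) - 1) * ((n : ℝ) - 3)) / ‖x‖ ^ 3)
    ∧ (∀ x : Euc n, R < ‖x‖ →
        bilap (Phi n M R) x = -((M + 1/2) * ((n : ℝ) - 1) * ((n : ℝ) - 3)) / ‖x‖ ^ 3)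
    ∧ (∀ x : Euc n, x ≠ 0 → ‖x‖ ≠ R → bilap (Phi n M R) x ≤ 0) := by
  have hn4 : (4:ℝ) ≤ (n:ℝ) := by exact_mod_cast hn
  have hn0 : (n:ℝ) ≠ 0 := by linarith
  have lap_inner : ∀ x : Euc n, x ≠ 0 → ‖x‖ < R →
      lap (Phi n M R) x = ((n : ℝ) - 1) / (2 * R) + M * ((n : ℝ) - 1) / ‖x‖ := by
    intro x hx hxR
    have hfeq : Phi n M R =ᶠ[nhds x]
        (fun y : Euc n => 0 + M * ‖y‖ ^ (1:ℝ) + (((n:ℝ)-1)/(4*n*R)) * ‖y‖ ^ (2:ℝ)) := by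
      refine Filter.eventually_of_mem (Metric.isOpen_ball.mem_nhds
        (mem_ball_zero_iff.2 hxR)) ?_
      intro y hy
      rw [mem_ball_zero_iff] at hy
      have hPy := Phi_inner_formula (M := M) hn hR (norm_nonneg y) hy
      show Phi n M R y = _
      unfold Phi
      rw [hPy]
      simp only [Real.rpow_one]
      try ring
      have h2 : ‖y‖ ^ (2:ℝ) = ‖y‖ ^ (2:ℕ) := by
        rw [← Real.rpow_natCast ‖y‖ 2]; norm_num
      rw [h2]; ring
    rw [lap_congr hfeq, lap_radial 0 M (((n:ℝ)-1)/(4*n*R)) 1 2 x hx]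
    have hx0 : ‖x‖ ≠ 0 := norm_ne_zero_iff.2 hx
    have e1 : ‖x‖ ^ ((1:ℝ)-2) = ‖x‖⁻¹ := by
      rw [show (1:ℝ)-2 = -1 by norm_num, Real.rpow_neg (norm_nonneg x), Real.rpow_one]
    have e2 : ‖x‖ ^ ((2:ℝ)-2) = 1 := by
      rw [show (2:ℝ)-2 = 0 by norm_num, Real.rpow_zero]
    rw [e1, e2]
    have hR0 : R ≠ 0 := hR.ne'
    field_simp
    ring
  have lap_outer : ∀ x : Euc n, R < ‖x‖ →
      lap (Phi n M R) x = (2 * M + 1) * ((n : ℝ) - 1) / (2 * ‖x‖) := by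
    intro x hxR
    have hx : x ≠ 0 := by
      intro h; rw [h, norm_zero] at hxR; linarith
    have hfeq : Phi n M R =ᶠ[nhds x]
        (fun y : Euc n => ((∫ s in (0:ℝ)..R, phiD n M R s)
            - ((M+1/2)*R + R^(n-1)/(2*n*((n:ℝ)-2)) * R ^ ((2:ℝ)-n)))
          + (M+1/2) * ‖y‖ ^ (1:ℝ) + (R^(n-1)/(2*n*((n:ℝ)-2))) * ‖y‖ ^ ((2:ℝ)-n)) := by
      refine Filter.eventually_of_mem ((isOpen_lt continuous_const continuous_norm).mem_nhds
        hxR) ?_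
      intro y hy
      simp only [Set.mem_setOf_eq] at hy
      have hPy := Phi_outer_formula (M := M) hn hR hy
      show Phi n M R y = _
      unfold Phi
      rw [hPy]
      simp only [Real.rpow_one]
      try ring
    rw [lap_congr hfeq, lap_radial _ (M+1/2) (R^(n-1)/(2*n*((n:ℝ)-2))) 1 ((2:ℝ)-n) x hx]
    have hx0 : ‖x‖ ≠ 0 := norm_ne_zero_iff.2 hx
    have e1 : ‖x‖ ^ ((1:ℝ)-2) = ‖x‖⁻¹ := by
      rw [show (1:ℝ)-2 = -1 by norm_num, Real.rpow_neg (norm_nonneg x), Real.rpow_one]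
    rw [e1, show ((2:ℝ)-(n:ℝ))*(((2:ℝ)-(n:ℝ))+(n:ℝ)-2) = 0 by ring]
    field_simp
    ring
  have bilap_inner : ∀ x : Euc n, x ≠ 0 → ‖x‖ < R →
      bilap (Phi n M R) x = -(M * ((n : ℝ) - 1) * ((n : ℝ) - 3)) / ‖x‖ ^ 3 := by
    intro x hx hxR
    have hopen : IsOpen (Metric.ball (0:Euc n) R ∩ {y : Euc n | y ≠ 0}) :=
      Metric.isOpen_ball.inter isOpen_compl_singleton
    have hfeq : (fun y => lap (Phi n M R) y) =ᶠ[nhds x]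
        (fun y : Euc n => ((n:ℝ)-1)/(2*R) + (M*((n:ℝ)-1)) * ‖y‖ ^ (-1:ℝ) + 0 * ‖y‖ ^ (2:ℝ)) := by
      refine Filter.eventually_of_mem (hopen.mem_nhds ⟨mem_ball_zero_iff.2 hxR, hx⟩) ?_
      rintro y ⟨hy1, hy2⟩
      show lap (Phi n M R) y = _
      rw [lap_inner y hy2 (mem_ball_zero_iff.1 hy1)]
      have e : ‖y‖ ^ (-1:ℝ) = ‖y‖⁻¹ := by
        rw [Real.rpow_neg (norm_nonneg y), Real.rpow_one]
      simp only [e]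
      ring
    unfold bilap
    rw [lap_congr hfeq, lap_radial _ (M*((n:ℝ)-1)) 0 (-1) 2 x hx]
    have e3 : ‖x‖ ^ ((-1:ℝ)-2) = (‖x‖ ^ (3:ℕ))⁻¹ := by
      rw [show (-1:ℝ)-2 = -((3:ℕ):ℝ) by norm_num, Real.rpow_neg (norm_nonneg x),
        Real.rpow_natCast]
    rw [e3]
    have hx0 : ‖x‖ ≠ 0 := norm_ne_zero_iff.2 hx
    field_simp
    ring
  have bilap_outer : ∀ x : Euc n, R < ‖x‖ →
      bilap (Phi n M R) x = -((M + 1/2) * ((n : ℝ) - 1) * ((n : ℝ) - 3)) / ‖x‖ ^ 3 := by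
    intro x hxR
    have hx : x ≠ 0 := by
      intro h; rw [h, norm_zero] at hxR; linarith
    have hopen : IsOpen {y : Euc n | R < ‖y‖} := isOpen_lt continuous_const continuous_norm
    have hfeq : (fun y => lap (Phi n M R) y) =ᶠ[nhds x]
        (fun y : Euc n => 0 + ((2*M+1)*((n:ℝ)-1)/2) * ‖y‖ ^ (-1:ℝ) + 0 * ‖y‖ ^ (2:ℝ)) := by
      refine Filter.eventually_of_mem (hopen.mem_nhds hxR) ?_
      intro y hy
      simp only [Set.mem_setOf_eq] at hy
      show lap (Phi n M R) y = _
      rw [lap_outer y hy]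
      have e : ‖y‖ ^ (-1:ℝ) = ‖y‖⁻¹ := by
        rw [Real.rpow_neg (norm_nonneg y), Real.rpow_one]
      simp only [e]
      ring
    unfold bilap
    rw [lap_congr hfeq, lap_radial _ ((2*M+1)*((n:ℝ)-1)/2) 0 (-1) 2 x hx]
    have e3 : ‖x‖ ^ ((-1:ℝ)-2) = (‖x‖ ^ (3:ℕ))⁻¹ := by
      rw [show (-1:ℝ)-2 = -((3:ℕ):ℝ) by norm_num, Real.rpow_neg (norm_nonneg x),
        Real.rpow_natCast]
    rw [e3]
    have hx0 : ‖x‖ ≠ 0 := norm_ne_zero_iff.2 hx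
    field_simp
    ring
  refine ⟨fun r hr => phiD_bounds hn hM hR hr, phiD_contOn hn hR,
    lap_inner, lap_outer, bilap_inner, bilap_outer, ?_⟩
  intro x hx hne
  have hx0 : (0:ℝ) < ‖x‖ := norm_pos_iff.2 hx
  rcases lt_or_gt_of_ne hne with h | h
  · rw [bilap_inner x hx h]
    apply div_nonpos_of_nonpos_of_nonneg
    · have : 0 ≤ M * ((n:ℝ)-1) * ((n:ℝ)-3) :=
        mul_nonneg (mul_nonneg hM (by linarith)) (by linarith)
      linarith
    · positivity
  · rw [bilap_outer x h]
    apply div_nonpos_of_nonpos_of_nonneg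
    · have : 0 ≤ (M + 1/2) * ((n:ℝ)-1) * ((n:ℝ)-3) :=
        mul_nonneg (mul_nonneg (by linarith) (by linarith)) (by linarith)
      linarith
    · positivity
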